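/- Assume all eight w_{ijk} are nonzero, and that F_{·1·} ≠ 0, F_{1··} ≠ 0 and H = 0. Then the set S = {(x,y) ∈ ℂ² : f₀(x,y) = 0 and f₁(x,y) = 0} has exactly one element (x*,y*). Furthermore: if F_{0··} ≠ 0 and F_{·0·} ≠ 0, then x* ≠ 0 and y* ≠ 0; if F_{0··} = 0 then x* = 0; and if F_{·0·} = 0 then y* = 0. -/

import Mathlib

theorem stmt_3 (w000 w001 w010 w011 w100 w101 w110 w111 : ℂ)
    (h000 : w000 ≠ 0) (h001 : w001 ≠ 0) (h010 : w010 ≠ 0) (h011 : w011 ≠ 0)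
    (h100 : w100 ≠ 0) (h101 : w101 ≠ 0) (h110 : w110 ≠ 0) (h111 : w111 ≠ 0)
    (hFd1 : w010 * w111 - w110 * w011 ≠ 0)
    (hF1d : w100 * w111 - w110 * w101 ≠ 0)
    (hH : ((w000 * w111 - w001 * w110) - (w010 * w101 - w011 * w100)) ^ 2
      - 4 * (w000 * w011 - w010 * w001) * (w100 * w111 - w110 * w101) = 0)
    (S : Set (ℂ × ℂ))
    (hS : S = {p : ℂ × ℂ |
      w000 + w100 * p.1 + w010 * p.2 + w110 * p.1 * p.2 = 0 ∧
      w001 + w101 * p.1 + w011 * p.2 + w111 * p.1 * p.2 = 0}) :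
    ∃ xs ys : ℂ, S = {(xs, ys)}
    ∧ ((w000 * w011 - w010 * w001 ≠ 0 ∧ w000 * w101 - w100 * w001 ≠ 0) →
        (xs ≠ 0 ∧ ys ≠ 0))
    ∧ (w000 * w011 - w010 * w001 = 0 → xs = 0)
    ∧ (w000 * w101 - w100 * w001 = 0 → ys = 0) := by
  have h2 : (2 : ℂ) ≠ 0 := two_ne_zero
  have h2F1d : (2 : ℂ) * (w100 * w111 - w110 * w101) ≠ 0 := mul_ne_zero h2 hF1d
  have h2Fd1 : (2 : ℂ) * (w010 * w111 - w110 * w011) ≠ 0 := mul_ne_zero h2 hFd1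
  have h4F1d : (4 : ℂ) * (w100 * w111 - w110 * w101) ≠ 0 := mul_ne_zero (by norm_num) hF1d
  have h4Fd1 : (4 : ℂ) * (w010 * w111 - w110 * w011) ≠ 0 := mul_ne_zero (by norm_num) hFd1
  refine ⟨-(((w000 * w111 - w001 * w110) - (w010 * w101 - w011 * w100)) / (2 * (w100 * w111 - w110 * w101))), -(((w000 * w111 - w001 * w110) + (w010 * w101 - w011 * w100)) / (2 * (w010 * w111 - w110 * w011))), ?_, ?_, ?_, ?_⟩
  · have hx2s : 2 * (w100 * w111 - w110 * w101) * (-(((w000 * w111 - w001 * w110) - (w010 * w101 - w011 * w100)) / (2 * (w100 * w111 - w110 * w101)))) + ((w000 * w111 - w001 * w110) - (w010 * w101 - w011 * w100)) = 0 := by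
      rw [mul_neg, mul_div_cancel₀ _ h2F1d]
      ring
    have hLs : (w000 * w111 - w001 * w110) + (w100 * w111 - w110 * w101) * (-(((w000 * w111 - w001 * w110) - (w010 * w101 - w011 * w100)) / (2 * (w100 * w111 - w110 * w101)))) + (w010 * w111 - w110 * w011) * (-(((w000 * w111 - w001 * w110) + (w010 * w101 - w011 * w100)) / (2 * (w010 * w111 - w110 * w011)))) = 0 := by
      have e1 := mul_div_cancel₀ ((w000 * w111 - w001 * w110) - (w010 * w101 - w011 * w100)) h2F1d
      have e2 := mul_div_cancel₀ ((w000 * w111 - w001 * w110) + (w010 * w101 - w011 * w100)) h2Fd1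
      linear_combination (-1/2 : ℂ) * e1 - (1/2 : ℂ) * e2
    rw [hS]
    ext ⟨x, y⟩
    simp only [Set.mem_setOf_eq, Set.mem_singleton_iff, Prod.mk.injEq]
    constructor
    · rintro ⟨hf0, hf1⟩
      have hL : (w000 * w111 - w001 * w110) + (w100 * w111 - w110 * w101) * x + (w010 * w111 - w110 * w011) * y = 0 := by
        linear_combination w111 * hf0 - w110 * hf1
      have hQ0 : w111 * ((w100 * w111 - w110 * w101) * x ^ 2 + ((w000 * w111 - w001 * w110) - (w010 * w101 - w011 * w100)) * x + (w000 * w011 - w010 * w001)) = 0 := by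
        linear_combination (w011 + w111 * x) * hL - (w010 * w111 - w110 * w011) * hf1
      have hQ : (w100 * w111 - w110 * w101) * x ^ 2 + ((w000 * w111 - w001 * w110) - (w010 * w101 - w011 * w100)) * x + (w000 * w011 - w010 * w001) = 0 :=
        (mul_eq_zero.mp hQ0).resolve_left h111
      have hsq : (2 * (w100 * w111 - w110 * w101) * x + ((w000 * w111 - w001 * w110) - (w010 * w101 - w011 * w100))) ^ 2 = 0 := by
        linear_combination 4 * (w100 * w111 - w110 * w101) * hQ + hH
      have hx2 : 2 * (w100 * w111 - w110 * w101) * x + ((w000 * w111 - w001 * w110) - (w010 * w101 - w011 * w100)) = 0 :=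
        pow_eq_zero_iff two_ne_zero |>.mp hsq
      have hx : x = -(((w000 * w111 - w001 * w110) - (w010 * w101 - w011 * w100)) / (2 * (w100 * w111 - w110 * w101))) := by
        rw [eq_neg_iff_add_eq_zero, ← mul_left_inj' h2F1d, add_mul, div_mul_cancel₀ _ h2F1d]
        linear_combination hx2
      have hy : y = -(((w000 * w111 - w001 * w110) + (w010 * w101 - w011 * w100)) / (2 * (w010 * w111 - w110 * w011))) := by
        rw [eq_neg_iff_add_eq_zero, ← mul_left_inj' h2Fd1, add_mul, div_mul_cancel₀ _ h2Fd1]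
        linear_combination 2 * hL - hx2
      exact ⟨hx, hy⟩
    · rintro ⟨hx, hy⟩
      subst hx hy
      have h4Q : (4 * (w100 * w111 - w110 * w101)) *
          ((w100 * w111 - w110 * w101) * (-(((w000 * w111 - w001 * w110) - (w010 * w101 - w011 * w100)) / (2 * (w100 * w111 - w110 * w101)))) ^ 2 + ((w000 * w111 - w001 * w110) - (w010 * w101 - w011 * w100)) * (-(((w000 * w111 - w001 * w110) - (w010 * w101 - w011 * w100)) / (2 * (w100 * w111 - w110 * w101)))) + (w000 * w011 - w010 * w001)) = 0 := by
        linear_combination (2 * (w100 * w111 - w110 * w101) * (-(((w000 * w111 - w001 * w110) - (w010 * w101 - w011 * w100)) / (2 * (w100 * w111 - w110 * w101)))) + ((w000 * w111 - w001 * w110) - (w010 * w101 - w011 * w100))) * hx2s - hH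
      have hQ : (w100 * w111 - w110 * w101) * (-(((w000 * w111 - w001 * w110) - (w010 * w101 - w011 * w100)) / (2 * (w100 * w111 - w110 * w101)))) ^ 2 + ((w000 * w111 - w001 * w110) - (w010 * w101 - w011 * w100)) * (-(((w000 * w111 - w001 * w110) - (w010 * w101 - w011 * w100)) / (2 * (w100 * w111 - w110 * w101)))) + (w000 * w011 - w010 * w001) = 0 :=
        (mul_eq_zero.mp h4Q).resolve_left h4F1d
      have hf1' : (w010 * w111 - w110 * w011) *
          (w001 + w101 * (-(((w000 * w111 - w001 * w110) - (w010 * w101 - w011 * w100)) / (2 * (w100 * w111 - w110 * w101)))) + w011 * (-(((w000 * w111 - w001 * w110) + (w010 * w101 - w011 * w100)) / (2 * (w010 * w111 - w110 * w011)))) + w111 * (-(((w000 * w111 - w001 * w110) - (w010 * w101 - w011 * w100)) / (2 * (w100 * w111 - w110 * w101)))) * (-(((w000 * w111 - w001 * w110) + (w010 * w101 - w011 * w100)) / (2 * (w010 * w111 - w110 * w011))))) = 0 := by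
        linear_combination (w011 + w111 * (-(((w000 * w111 - w001 * w110) - (w010 * w101 - w011 * w100)) / (2 * (w100 * w111 - w110 * w101))))) * hLs - w111 * hQ
      have hf1 : w001 + w101 * (-(((w000 * w111 - w001 * w110) - (w010 * w101 - w011 * w100)) / (2 * (w100 * w111 - w110 * w101)))) + w011 * (-(((w000 * w111 - w001 * w110) + (w010 * w101 - w011 * w100)) / (2 * (w010 * w111 - w110 * w011)))) + w111 * (-(((w000 * w111 - w001 * w110) - (w010 * w101 - w011 * w100)) / (2 * (w100 * w111 - w110 * w101)))) * (-(((w000 * w111 - w001 * w110) + (w010 * w101 - w011 * w100)) / (2 * (w010 * w111 - w110 * w011)))) = 0 :=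
        (mul_eq_zero.mp hf1').resolve_left hFd1
      have hf0' : w111 *
          (w000 + w100 * (-(((w000 * w111 - w001 * w110) - (w010 * w101 - w011 * w100)) / (2 * (w100 * w111 - w110 * w101)))) + w010 * (-(((w000 * w111 - w001 * w110) + (w010 * w101 - w011 * w100)) / (2 * (w010 * w111 - w110 * w011)))) + w110 * (-(((w000 * w111 - w001 * w110) - (w010 * w101 - w011 * w100)) / (2 * (w100 * w111 - w110 * w101)))) * (-(((w000 * w111 - w001 * w110) + (w010 * w101 - w011 * w100)) / (2 * (w010 * w111 - w110 * w011))))) = 0 := by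
        linear_combination hLs + w110 * hf1
      have hf0 : w000 + w100 * (-(((w000 * w111 - w001 * w110) - (w010 * w101 - w011 * w100)) / (2 * (w100 * w111 - w110 * w101)))) + w010 * (-(((w000 * w111 - w001 * w110) + (w010 * w101 - w011 * w100)) / (2 * (w010 * w111 - w110 * w011)))) + w110 * (-(((w000 * w111 - w001 * w110) - (w010 * w101 - w011 * w100)) / (2 * (w100 * w111 - w110 * w101)))) * (-(((w000 * w111 - w001 * w110) + (w010 * w101 - w011 * w100)) / (2 * (w010 * w111 - w110 * w011)))) = 0 :=
        (mul_eq_zero.mp hf0').resolve_left h111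
      exact ⟨hf0, hf1⟩
  · rintro ⟨hF0, hFd0⟩
    constructor
    · intro h
      rw [neg_eq_zero, div_eq_zero_iff] at h
      have hD : (w000 * w111 - w001 * w110) - (w010 * w101 - w011 * w100) = 0 := h.resolve_right h2F1d
      have h4 : (4 * (w100 * w111 - w110 * w101)) * (w000 * w011 - w010 * w001) = 0 := by
        linear_combination ((w000 * w111 - w001 * w110) - (w010 * w101 - w011 * w100)) * hD - hH
      exact hF0 ((mul_eq_zero.mp h4).resolve_left h4F1d)
    · intro h
      rw [neg_eq_zero, div_eq_zero_iff] at h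
      have hD : (w000 * w111 - w001 * w110) + (w010 * w101 - w011 * w100) = 0 := h.resolve_right h2Fd1
      have h4 : (4 * (w010 * w111 - w110 * w011)) * (w000 * w101 - w100 * w001) = 0 := by
        linear_combination ((w000 * w111 - w001 * w110) + (w010 * w101 - w011 * w100)) * hD - hH
      exact hFd0 ((mul_eq_zero.mp h4).resolve_left h4Fd1)
  · intro hF0
    have hsq : ((w000 * w111 - w001 * w110) - (w010 * w101 - w011 * w100)) ^ 2 = 0 := by
      linear_combination hH + 4 * (w100 * w111 - w110 * w101) * hF0
    have hD : (w000 * w111 - w001 * w110) - (w010 * w101 - w011 * w100) = 0 := pow_eq_zero_iff two_ne_zero |>.mp hsq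
    rw [hD]
    simp
  · intro hFd0
    have hsq : ((w000 * w111 - w001 * w110) + (w010 * w101 - w011 * w100)) ^ 2 = 0 := by
      linear_combination hH + 4 * (w010 * w111 - w110 * w011) * hFd0
    have hD : (w000 * w111 - w001 * w110) + (w010 * w101 - w011 * w100) = 0 := pow_eq_zero_iff two_ne_zero |>.mp hsq
    rw [hD]
    simp
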